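/- Let G be a finite simple graph, let S₁, …, S_k ⊆ V be anchor groups, and let γ be a positive integer. Then there exists a tree T in G with V(T) ∩ S_i ≠ ∅ for every i ∈ {1, …, k} and |V(T)| + |E(T)| ≤ γ (a Group Steiner tree of size at most γ), if and only if there exist a vertex v* ∈ V and a connected subgraph H of G with v* ∈ V(H), V(H) ∩ S_i ≠ ∅ for every i ∈ {1, …, k}, and Φ(H) ≥ 1/γ, where Φ is computed with respect to the value function assigning 1 to v* and 0 to every other vertex and every edge. -/

import Mathlib

open scoped BigOperators

/-- The information-density objective Φ of a subgraph `H`, given a value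
function on vertices and on edges. -/
noncomputable def Phi {V : Type*} {G : SimpleGraph V} (H : G.Subgraph)
    (valV : V → ℝ) (valE : Sym2 V → ℝ) : ℝ :=
  ((∑ᶠ v ∈ H.verts, valV v) + ∑ᶠ e ∈ H.edgeSet, valE e) /
    ((H.verts.ncard + H.edgeSet.ncard : ℕ) : ℝ)

/-- The reduction value function on vertices: `1` at `vstar`, `0` elsewhere. -/
noncomputable def redVal {V : Type*} [DecidableEq V] (vstar : V) : V → ℝ :=
  fun v => if v = vstar then 1 else 0

section Aux
open SimpleGraph

lemma preconn_del {V : Type*} {G : SimpleGraph V} {v w : V} (h : G.Preconnected)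
    (hr : (G \ fromEdgeSet {s(v,w)}).Reachable v w) :
    (G \ fromEdgeSet {s(v,w)}).Preconnected := by
  intro x y
  have hxy := (reachable_iff_reflTransGen x y).mp (h x y)
  induction hxy with
  | refl => exact Reachable.refl _
  | tail hstep hadj ih =>
    rename_i b c
    refine ih.trans ?_
    by_cases he : s(b, c) = s(v, w)
    · rw [Sym2.eq_iff] at he
      rcases he with ⟨rfl, rfl⟩ | ⟨rfl, rfl⟩
      · exact hr
      · exact hr.symm
    · exact Adj.reachable ⟨hadj, by simp [fromEdgeSet_adj, he]⟩

lemma exists_spanning_tree_aux {V : Type*} [Finite V] :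
    ∀ (n : ℕ) (G : SimpleGraph V), G.edgeSet.ncard ≤ n → G.Connected →
      ∃ T : SimpleGraph V, T ≤ G ∧ T.IsTree := by
  intro n
  induction n with
  | zero =>
    intro G hn hc
    have he : G = ⊥ :=
      edgeSet_eq_empty.mp ((Set.ncard_eq_zero (Set.toFinite G.edgeSet)).mp (Nat.le_zero.mp hn))
    exact ⟨G, le_refl _, hc, he ▸ isAcyclic_bot⟩
  | succ n ih =>
    intro G hn hc
    by_cases hac : G.IsAcyclic
    · exact ⟨G, le_refl _, hc, hac⟩
    · rw [isAcyclic_iff_forall_adj_isBridge] at hac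
      push_neg at hac
      obtain ⟨v, w, hadj, hnb⟩ := hac
      rw [isBridge_iff] at hnb
      push_neg at hnb
      have hr : (G \ fromEdgeSet {s(v, w)}).Reachable v w := hnb
      set G' := G \ fromEdgeSet {s(v, w)} with hG'
      have hle : G' ≤ G := sdiff_le
      have hc' : G'.Connected := by have := hc.nonempty; exact ⟨preconn_del hc.preconnected hr⟩
      have hE : G'.edgeSet = G.edgeSet \ {s(v, w)} := by
        simp [hG', edgeSet_sdiff, edgeSet_fromEdgeSet, edgeSet_sdiff_sdiff_isDiag]
      have hcard : G'.edgeSet.ncard ≤ n := by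
        rw [hE]
        have := Set.ncard_diff_singleton_add_one ((G.mem_edgeSet).mpr hadj) (Set.toFinite _)
        omega
      obtain ⟨T, hT, hTt⟩ := ih G' hcard hc'
      exact ⟨T, hT.trans hle, hTt⟩

lemma exists_spanning_tree {V : Type*} [Finite V] (G : SimpleGraph V) (hc : G.Connected) :
    ∃ T : SimpleGraph V, T ≤ G ∧ T.IsTree :=
  exists_spanning_tree_aux G.edgeSet.ncard G le_rfl hc

/-- Turn a tree on the coercion of `H` into a subgraph of `G`. -/
def treeSub {V : Type*} {G : SimpleGraph V} (H : G.Subgraph) (T' : SimpleGraph H.verts)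
    (hle : T' ≤ H.coe) : G.Subgraph where
  verts := H.verts
  Adj v w := ∃ (hv : v ∈ H.verts) (hw : w ∈ H.verts), T'.Adj ⟨v, hv⟩ ⟨w, hw⟩
  adj_sub := by rintro v w ⟨hv, hw, h⟩; exact H.coe_adj_sub _ _ (hle h)
  edge_vert := by rintro v w ⟨hv, hw, h⟩; exact hv
  symm := ⟨by rintro v w ⟨hv, hw, h⟩; exact ⟨hw, hv, h.symm⟩⟩

lemma subgraph_tree {V : Type*} [Fintype V] {G : SimpleGraph V} (H : G.Subgraph)
    (hc : H.Connected) :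
    ∃ T : G.Subgraph, T.Connected ∧ T.verts = H.verts ∧
      T.edgeSet.ncard = H.verts.ncard - 1 ∧ T.edgeSet ⊆ H.edgeSet := by
  classical
  obtain ⟨T', hle, hT'⟩ := exists_spanning_tree H.coe hc.coe
  refine ⟨treeSub H T' hle, ?_, rfl, ?_, ?_⟩
  · have iso : (treeSub H T' hle).coe ≃g T' := by
      refine ⟨Equiv.refl _, ?_⟩
      rintro ⟨a, ha⟩ ⟨b, hb⟩
      show T'.Adj _ _ ↔ (treeSub H T' hle).Adj a b
      constructor
      · intro h; exact ⟨ha, hb, h⟩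
      · rintro ⟨hv, hw, h⟩; exact h
    exact ⟨(iso.connected_iff).mpr hT'.isConnected⟩
  · -- edge count
    have hEim : (treeSub H T' hle).edgeSet = Sym2.map Subtype.val '' T'.edgeSet := by
      ext e
      induction e using Sym2.ind with
      | _ x y =>
        simp only [Subgraph.mem_edgeSet, Set.mem_image]
        constructor
        · rintro ⟨hx, hy, h⟩
          exact ⟨s(⟨x, hx⟩, ⟨y, hy⟩), h, rfl⟩
        · rintro ⟨e', he', hmap⟩
          induction e' using Sym2.ind with
          | _ a b =>
            simp only [Sym2.map_pair_eq, Sym2.eq_iff] at hmap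
            rcases hmap with ⟨ha, hb⟩ | ⟨ha, hb⟩
            · refine ⟨ha ▸ a.2, hb ▸ b.2, ?_⟩
              have h2 : T'.Adj a b := he'
              convert h2 using 2 <;> simp [ha, hb]
            · refine ⟨hb ▸ b.2, ha ▸ a.2, ?_⟩
              have h2 : T'.Adj b a := he'.symm
              convert h2 using 2 <;> simp [ha, hb]
    rw [hEim, Set.ncard_image_of_injective _ (Sym2.map.injective Subtype.val_injective)]
    have hfin : T'.edgeFinset.card + 1 = Fintype.card H.verts := hT'.card_edgeFinset
    have h1 : T'.edgeSet.ncard = T'.edgeFinset.card := by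
      rw [Set.ncard_eq_toFinset_card']; congr 1
    have h2 : H.verts.ncard = Fintype.card H.verts := by
      rw [← Nat.card_coe_set_eq, Nat.card_eq_fintype_card]
    omega
  · rintro e he
    induction e using Sym2.ind with
    | _ x y =>
      simp only [Subgraph.mem_edgeSet] at he ⊢
      obtain ⟨hx, hy, h⟩ := he
      exact hle h

lemma phi_eq {V : Type*} [Fintype V] [DecidableEq V] {G : SimpleGraph V} (H : G.Subgraph)
    (vstar : V) (hv : vstar ∈ H.verts) :
    Phi H (redVal vstar) (fun _ => 0) = 1 / ((H.verts.ncard + H.edgeSet.ncard : ℕ) : ℝ) := by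
  have hf : H.verts.Finite := Set.toFinite _
  have h1 : (∑ᶠ v ∈ H.verts, redVal vstar v) = 1 := by
    rw [← hf.coe_toFinset, finsum_mem_coe_finset]
    simp [redVal, Finset.sum_ite_eq', hf.mem_toFinset, hv]
  have h2 : (∑ᶠ e ∈ H.edgeSet, (fun _ => (0:ℝ)) e) = 0 := by simp
  rw [Phi, h1, h2, add_zero]

end Aux

theorem stmt_5 {V : Type*} [Fintype V] [DecidableEq V] (G : SimpleGraph V)
    (k : ℕ) (S : Fin k → Set V) (γ : ℕ) (hγ : 0 < γ) :
    (∃ T : G.Subgraph, T.Connected ∧ T.edgeSet.ncard = T.verts.ncard - 1 ∧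
        (∀ i : Fin k, (T.verts ∩ S i).Nonempty) ∧
        T.verts.ncard + T.edgeSet.ncard ≤ γ) ↔
      (∃ vstar : V, ∃ H : G.Subgraph, H.Connected ∧ vstar ∈ H.verts ∧
        (∀ i : Fin k, (H.verts ∩ S i).Nonempty) ∧
        Phi H (redVal vstar) (fun _ => 0) ≥ 1 / (γ : ℝ)) := by
  constructor
  · rintro ⟨T, hconn, htree, hhit, hsize⟩
    obtain ⟨vstar, hvs⟩ := hconn.nonempty
    refine ⟨vstar, T, hconn, hvs, hhit, ?_⟩
    rw [phi_eq T vstar hvs]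
    have hN : 0 < T.verts.ncard + T.edgeSet.ncard := by
      have := Set.ncard_pos (Set.toFinite T.verts) |>.mpr ⟨vstar, hvs⟩
      omega
    apply one_div_le_one_div_of_le
    · exact_mod_cast hN
    · exact_mod_cast hsize
  · rintro ⟨vstar, H, hconn, hvs, hhit, hphi⟩
    rw [phi_eq H vstar hvs] at hphi
    have hγ' : (0:ℝ) < (γ:ℕ) := by exact_mod_cast hγ
    have hNγ : H.verts.ncard + H.edgeSet.ncard ≤ γ := by
      have := le_of_one_div_le_one_div hγ' hphi
      exact_mod_cast this
    obtain ⟨T, hTc, hTv, hTe, hTsub⟩ := subgraph_tree H hconn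
    have hn1 : 1 ≤ H.verts.ncard :=
      Set.ncard_pos (Set.toFinite H.verts) |>.mpr ⟨vstar, hvs⟩
    refine ⟨T, hTc, by rw [hTe, hTv], fun i => by rw [hTv]; exact hhit i, ?_⟩
    have hE : H.verts.ncard - 1 ≤ H.edgeSet.ncard := by
      rw [← hTe]
      exact Set.ncard_le_ncard hTsub (Set.toFinite _)
    rw [hTv, hTe]
    omega
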